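/- For every integer n > 1, I_r(ℤ/nℤ) ≥ D((ℤ/nℤ)^×) + Ω(n) - ω(n), where Ω(n) is the number of prime factors of n counted with multiplicity and ω(n) is the number of distinct prime factors of n. -/

import Mathlib

open Finset

-- helper: pigeonhole, constant subsequence of length E
lemma pigeon {M : Type*} [DecidableEq M] [Fintype M] {t E : ℕ} (hE : 0 < E)
    (ht : Fintype.card M * (E - 1) < t) (f : Fin t → M) :
    ∃ (x : M) (T : Finset (Fin t)), T.card = E ∧ ∀ i ∈ T, f i = x := by
  have : Fintype.card M * (E - 1) < Fintype.card (Fin t) := by simpa using ht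
  obtain ⟨x, hx⟩ := Fintype.exists_lt_card_fiber_of_mul_lt_card (f := f) (n := E - 1) this
  have hEle : E ≤ (Finset.univ.filter fun i => f i = x).card := by omega
  obtain ⟨T, hTsub, hTcard⟩ := Finset.exists_subset_card_eq hEle
  exact ⟨x, T, hTcard, fun i hi => (Finset.mem_filter.mp (hTsub hi)).2⟩

-- helper: eventually periodic powers
lemma pow_periodic {M : Type*} [CommMonoid M] [DecidableEq M] [Fintype M] (x : M) :
    ∃ a b : ℕ, 0 < a ∧ 0 < b ∧ a ≤ Fintype.card M + 1 ∧ b ≤ Fintype.card M ∧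
      x ^ a = x ^ (a + b) := by
  have h : Fintype.card M < Fintype.card (Fin (Fintype.card M + 1)) := by simp
  obtain ⟨i, j, hij, hfij⟩ := Fintype.exists_ne_map_eq_of_card_lt
    (fun i : Fin (Fintype.card M + 1) => x ^ ((i : ℕ) + 1)) h
  rcases lt_or_gt_of_ne (fun h => hij (Fin.ext h) : (i : ℕ) ≠ j) with h' | h'
  · exact ⟨(i : ℕ) + 1, (j : ℕ) - (i : ℕ), by omega, by omega, by omega, by omega,
      by rw [hfij]; congr 1; omega⟩
  · exact ⟨(j : ℕ) + 1, (i : ℕ) - (j : ℕ), by omega, by omega, by omega, by omega,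
      by rw [← hfij]; congr 1; omega⟩

lemma pow_idem {M : Type*} [CommMonoid M] {x : M} {a b s : ℕ} (hab : x ^ a = x ^ (a + b))
    (has : a ≤ s) (hbs : b ∣ s) : x ^ s * x ^ s = x ^ s := by
  have key : ∀ k, x ^ (a + k * b) = x ^ a := by
    intro k
    induction k with
    | zero => simp
    | succ k ih =>
        have : a + (k+1) * b = (a + b) + k * b := by ring
        rw [this, pow_add, ← hab, ← pow_add, ih]
  obtain ⟨d, rfl⟩ := hbs
  rw [mul_comm b d] at has ⊢
  calc x ^ (d * b) * x ^ (d * b) = x ^ (d * b - a) * x ^ (a + d * b) := by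
        rw [← pow_add, ← pow_add]; congr 1; omega
    _ = x ^ (d * b - a) * x ^ a := by rw [key]
    _ = x ^ (d * b) := by rw [← pow_add]; congr 1; omega

-- Davenport set nonempty
lemma dav_set_mem (G : Type*) [CommGroup G] [Fintype G] [DecidableEq G] :
    (Fintype.card G * (Fintype.card G - 1) + 1) ∈ {k : ℕ | 0 < k ∧ ∀ f : Fin k → G,
      ∃ T : Finset (Fin k), T.Nonempty ∧ ∏ i ∈ T, f i = 1} := by
  constructor
  · omega
  · intro f
    have hcpos : 0 < Fintype.card G := Fintype.card_pos
    obtain ⟨x, T, hTcard, hTconst⟩ := pigeon hcpos (by omega) f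
    refine ⟨T, Finset.card_pos.mp (by omega), ?_⟩
    rw [Finset.prod_congr rfl hTconst, Finset.prod_const, hTcard, pow_card_eq_one]


-- EB set nonempty
lemma eb_set_mem (M : Type*) [CommMonoid M] [Fintype M] [DecidableEq M] :
    (Fintype.card M * ((Fintype.card M + 1).factorial - 1) + 1) ∈ {t : ℕ | 0 < t ∧
      ∀ f : Fin t → M, ∃ T : Finset (Fin t), T.Nonempty ∧
        (∏ i ∈ T, f i) * (∏ i ∈ T, f i) = ∏ i ∈ T, f i} := by
  constructor
  · omega
  · intro f
    have hEpos : 0 < (Fintype.card M + 1).factorial := Nat.factorial_pos _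
    obtain ⟨x, T, hTcard, hTconst⟩ := pigeon hEpos (by omega) f
    refine ⟨T, Finset.card_pos.mp (by omega), ?_⟩
    rw [Finset.prod_congr rfl hTconst, Finset.prod_const, hTcard]
    obtain ⟨a, b, ha, hb, haM, hbM, hab⟩ := pow_periodic x
    exact pow_idem hab (le_trans haM (Nat.self_le_factorial _))
      (Nat.dvd_factorial hb (by omega))


lemma crt_elt {n p : ℕ} (hn : n ≠ 0) (hp : p ∈ n.primeFactors) :
    ∃ c : ℕ, c ≡ p [MOD p ^ n.factorization p] ∧
      ∀ q ∈ n.primeFactors, q ≠ p → c ≡ 1 [MOD q ^ n.factorization q] := by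
  have hp' : p.Prime := Nat.prime_of_mem_primeFactors hp
  have cop : Nat.Coprime (p ^ n.factorization p) (ordCompl[p] n) :=
    Nat.Coprime.pow_left _ (Nat.coprime_ordCompl hp' hn)
  obtain ⟨c, hc1, hc2⟩ := Nat.chineseRemainder cop p 1
  refine ⟨c, hc1, fun q hq hqp => ?_⟩
  have hq' : q.Prime := Nat.prime_of_mem_primeFactors hq
  have cop2 : Nat.Coprime (q ^ n.factorization q) (p ^ n.factorization p) :=
    Nat.Coprime.pow _ _ ((Nat.coprime_primes hq' hp').mpr hqp)
  have hdvd : q ^ n.factorization q ∣ ordCompl[p] n := by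
    refine (Nat.Coprime.dvd_of_dvd_mul_left cop2 ?_)
    rw [Nat.ordProj_mul_ordCompl_eq_self n p]
    exact Nat.ordProj_dvd n q
  exact Nat.ModEq.of_dvd hdvd hc2

lemma omega_sum {n : ℕ} :
    ∑ p ∈ n.primeFactors, n.factorization p = n.primeFactorsList.length := by
  have := Multiset.toFinset_sum_count_eq (↑n.primeFactorsList : Multiset ℕ)
  simp only [List.toFinset_coe, Multiset.coe_count, Multiset.coe_card] at this
  rw [← this]
  apply Finset.sum_congr (Nat.toFinset_factors n).symm
  intro p _
  exact (Nat.primeFactorsList_count_eq).symm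

/-- The Davenport constant of a (multiplicative) commutative group: the least `k > 0` such
that every sequence of `k` elements has a nonempty subsequence with product `1`. -/
noncomputable def Davenport (G : Type*) [CommGroup G] : ℕ :=
  sInf {k : ℕ | 0 < k ∧ ∀ f : Fin k → G,
    ∃ T : Finset (Fin k), T.Nonempty ∧ ∏ i ∈ T, f i = 1}

/-- The Erdős–Burgess constant of a commutative monoid: the least `t > 0` such that every
sequence of `t` elements has a nonempty subsequence whose product is idempotent. -/
noncomputable def ErdosBurgess (M : Type*) [CommMonoid M] : ℕ :=
  sInf {t : ℕ | 0 < t ∧ ∀ f : Fin t → M,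
    ∃ T : Finset (Fin t), T.Nonempty ∧ (∏ i ∈ T, f i) * (∏ i ∈ T, f i) = ∏ i ∈ T, f i}

lemma dav_pos (G : Type*) [CommGroup G] [Fintype G] [DecidableEq G] : 0 < Davenport G :=
  (Nat.sInf_mem (⟨_, dav_set_mem G⟩ : Set.Nonempty _)).1

lemma dav_bad (G : Type*) [CommGroup G] [Fintype G] [DecidableEq G] :
    ∃ u : Fin (Davenport G - 1) → G,
      ∀ T : Finset (Fin (Davenport G - 1)), T.Nonempty → ∏ i ∈ T, u i ≠ 1 := by
  have hDpos : 0 < Davenport G := dav_pos G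
  by_cases hD1 : Davenport G = 1
  · refine ⟨fun _ => 1, fun T hT => ?_⟩
    obtain ⟨i, -⟩ := hT
    exact (Fin.cast (by omega : Davenport G - 1 = 0) i).elim0
  · have hmem : Davenport G - 1 ∉ {k : ℕ | 0 < k ∧ ∀ f : Fin k → G,
        ∃ T : Finset (Fin k), T.Nonempty ∧ ∏ i ∈ T, f i = 1} :=
      Nat.notMem_of_lt_sInf (by
        show Davenport G - 1 < Davenport G
        omega)
    simp only [Set.mem_setOf_eq, not_and, not_forall, not_exists] at hmem
    obtain ⟨f, hf⟩ := hmem (by omega)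
    refine ⟨f, fun T hT hprod => ?_⟩
    have := hf T
    push_neg at this
    exact this hT hprod


theorem stmt9 (n : ℕ) (hn : 1 < n) :
    Davenport ((ZMod n)ˣ) + n.primeFactorsList.length - n.primeFactors.card ≤
      ErdosBurgess (ZMod n) := by
  have hn0 : n ≠ 0 := by omega
  haveI : NeZero n := ⟨hn0⟩
  -- Davenport facts
  obtain ⟨u, hu⟩ := dav_bad ((ZMod n)ˣ)
  have hDpos : 0 < Davenport ((ZMod n)ˣ) := dav_pos _
  -- CRT elements
  choose! c hc1 hc2 using fun p (hp : p ∈ n.primeFactors) => crt_elt hn0 hp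
  -- facts about factorization
  have hfac1 : ∀ p ∈ n.primeFactors, 1 ≤ n.factorization p := fun p hp =>
    (Nat.Prime.factorization_pos_of_dvd (Nat.prime_of_mem_primeFactors hp) hn0
      (Nat.dvd_of_mem_primeFactors hp))
  -- index type
  have hcardsig : Fintype.card ((p : n.primeFactors) × Fin (n.factorization ↑p - 1)) =
      ∑ p ∈ n.primeFactors, (n.factorization p - 1) := by
    rw [Fintype.card_sigma]
    simp only [Fintype.card_fin]
    exact Finset.sum_coe_sort n.primeFactors (fun p => n.factorization p - 1)
  have hsum : ∑ p ∈ n.primeFactors, (n.factorization p - 1) + n.primeFactors.card =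
      n.primeFactorsList.length := by
    rw [← omega_sum, Finset.card_eq_sum_ones, ← Finset.sum_add_distrib]
    exact Finset.sum_congr rfl fun p hp => by have := hfac1 p hp; omega
  set ι := (Fin (Davenport ((ZMod n)ˣ) - 1) ⊕ ((p : n.primeFactors) × Fin (n.factorization ↑p - 1))) with hι
  have hcard : Fintype.card ι = (Davenport ((ZMod n)ˣ) - 1) + ∑ p ∈ n.primeFactors, (n.factorization p - 1) := by
    show Fintype.card (Fin (Davenport ((ZMod n)ˣ) - 1) ⊕ ((p : n.primeFactors) × Fin (n.factorization ↑p - 1))) = _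
    rw [Fintype.card_sum, Fintype.card_fin, hcardsig]
  -- the sequence
  set g : ι → ZMod n := Sum.elim (fun i => ((u i : (ZMod n)ˣ) : ZMod n))
    (fun b => ((c ↑b.1 : ℕ) : ZMod n)) with hg
  -- main claim
  have key : ∀ t ∈ {t : ℕ | 0 < t ∧ ∀ f : Fin t → ZMod n,
      ∃ T : Finset (Fin t), T.Nonempty ∧
        (∏ i ∈ T, f i) * (∏ i ∈ T, f i) = ∏ i ∈ T, f i},
      Fintype.card ι + 1 ≤ t := by
    intro t ht
    by_contra hlt
    push_neg at hlt
    obtain ⟨htpos, hall⟩ := ht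
    obtain ⟨emb⟩ : Nonempty (Fin t ↪ ι) :=
      Function.Embedding.nonempty_of_card_le (by simp; omega)
    obtain ⟨T, hTne, hTidem⟩ := hall (g ∘ emb)
    set S : Finset ι := T.map emb with hSdef
    have hSne : S.Nonempty := Finset.Nonempty.map hTne
    have hprodS : ∏ i ∈ S, g i = ∏ i ∈ T, g (emb i) := Finset.prod_map T emb g
    have hx : (∏ i ∈ S, g i) * (∏ i ∈ S, g i) = ∏ i ∈ S, g i := by
      rw [hprodS]; exact hTidem
    have hsplit : ∏ i ∈ S, g i =
        (∏ i ∈ S.toLeft, ((u i : (ZMod n)ˣ) : ZMod n)) *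
          ∏ b ∈ S.toRight, ((c ↑b.1 : ℕ) : ZMod n) := by
      conv_lhs => rw [← Finset.toLeft_disjSum_toRight (u := S)]
      rw [hg, Finset.prod_disjSum]; rfl
    rcases S.toRight.eq_empty_or_nonempty with hB | hB
    · -- all elements are units
      have hA : S.toLeft.Nonempty := by
        obtain ⟨s, hs⟩ := hSne
        cases s with
        | inl a => exact ⟨a, Finset.mem_toLeft.mpr hs⟩
        | inr b =>
            exfalso
            have : b ∈ S.toRight := Finset.mem_toRight.mpr hs
            rw [hB] at this
            exact absurd this (Finset.notMem_empty b)
      have hxval : ∏ i ∈ S, g i = ((∏ i ∈ S.toLeft, u i : (ZMod n)ˣ) : ZMod n) := by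
        rw [hsplit, hB, Finset.prod_empty, mul_one, Units.coe_prod]
      have hUU : (∏ i ∈ S.toLeft, u i) * (∏ i ∈ S.toLeft, u i) = ∏ i ∈ S.toLeft, u i := by
        apply Units.ext
        rw [Units.val_mul, ← hxval]
        exact hx
      have hP1 : ∏ i ∈ S.toLeft, u i = 1 := by
        simpa using congrArg (fun z => (∏ i ∈ S.toLeft, u i)⁻¹ * z) hUU
      exact hu S.toLeft hA hP1
    · -- some non-unit element
      obtain ⟨b₀, hb₀⟩ := hB
      have hpmem : (↑b₀.1 : ℕ) ∈ n.primeFactors := b₀.1.2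
      set p : ℕ := ↑b₀.1 with hpdef
      have hp' : p.Prime := Nat.prime_of_mem_primeFactors hpmem
      set e : ℕ := n.factorization p with hedef
      have he : 1 ≤ e := hfac1 p hpmem
      have hPdvd : p ^ e ∣ n := Nat.ordProj_dvd n p
      haveI : NeZero (p ^ e) := ⟨(pow_pos hp'.pos e).ne'⟩
      set φ : ZMod n →+* ZMod (p ^ e) := ZMod.castHom hPdvd (ZMod (p ^ e)) with hφ
      set k := (S.toRight.filter (fun b => (↑b.1 : ℕ) = p)).card with hkdef
      have hk1 : 1 ≤ k := Finset.card_pos.mpr ⟨b₀, Finset.mem_filter.mpr ⟨hb₀, rfl⟩⟩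
      have hke : k ≤ e - 1 := by
        have hinj : (S.toRight.filter fun b => (↑b.1 : ℕ) = p).card ≤
            (Finset.range (e - 1)).card := by
          apply Finset.card_le_card_of_injOn (fun b => (↑b.2 : ℕ))
          · intro b hb
            simp only [Finset.coe_filter, Set.mem_setOf_eq] at hb
            simp only [Finset.mem_coe, Finset.mem_range]
            have hlt := b.2.isLt
            have heq : n.factorization ↑b.1 = e := by rw [hb.2]
            omega
          · intro b hb b' hb' hval
            simp only [Finset.coe_filter, Set.mem_setOf_eq] at hb hb'
            rcases b with ⟨q1, i1⟩
            rcases b' with ⟨q2, i2⟩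
            have hq : q1 = q2 := Subtype.ext (by rw [hb.2, hb'.2])
            subst hq
            simp only at hval
            exact congrArg (Sigma.mk q1) (Fin.ext hval)
        simpa using hinj
      -- compute the image under φ
      have hcp : ((c p : ℕ) : ZMod (p ^ e)) = (p : ZMod (p ^ e)) :=
        (ZMod.natCast_eq_natCast_iff _ _ _).mpr (hc1 p hpmem)
      have hcq : ∀ b ∈ S.toRight.filter (fun b => ¬ (↑b.1 : ℕ) = p),
          ((c ↑b.1 : ℕ) : ZMod (p ^ e)) = 1 := by
        intro b hb
        simp only [Finset.mem_filter] at hb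
        have h1 : (c ↑b.1 : ℕ) ≡ 1 [MOD p ^ e] :=
          hc2 (↑b.1) b.1.2 p hpmem (fun h => hb.2 h.symm)
        have := (ZMod.natCast_eq_natCast_iff _ _ _).mpr h1
        simpa using this
      have hcpall : ∀ b ∈ S.toRight.filter (fun b => (↑b.1 : ℕ) = p),
          ((c ↑b.1 : ℕ) : ZMod (p ^ e)) = (p : ZMod (p ^ e)) := by
        intro b hb
        simp only [Finset.mem_filter] at hb
        rw [hb.2, hcp]
      have hprodB : ∏ b ∈ S.toRight, ((c ↑b.1 : ℕ) : ZMod (p ^ e)) =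
          (p : ZMod (p ^ e)) ^ k := by
        rw [← Finset.prod_filter_mul_prod_filter_not S.toRight (fun b => (↑b.1 : ℕ) = p)]
        rw [Finset.prod_congr rfl hcq, Finset.prod_const_one, mul_one]
        rw [Finset.prod_congr rfl hcpall, Finset.prod_const]
      have hunit : IsUnit (φ (∏ i ∈ S.toLeft, ((u i : (ZMod n)ˣ) : ZMod n))) := by
        rw [← Units.coe_prod]
        exact (Units.isUnit _).map φ
      obtain ⟨W, hW⟩ := hunit
      have hy : φ (∏ i ∈ S, g i) = (W : ZMod (p ^ e)) * (p : ZMod (p ^ e)) ^ k := by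
        rw [hsplit, map_mul, ← hW, map_prod, ← hprodB]
        congr 1
        exact Finset.prod_congr rfl fun b _ => map_natCast φ _
      -- idempotency transfers
      have hyidem : (φ (∏ i ∈ S, g i)) * (φ (∏ i ∈ S, g i)) = φ (∏ i ∈ S, g i) := by
        rw [← map_mul, hx]
      -- nilpotency of y
      have hpnil : (p : ZMod (p ^ e)) ^ e = 0 := by
        rw [← Nat.cast_pow, ZMod.natCast_self]
      have hynil : IsNilpotent (φ (∏ i ∈ S, g i)) := by
        refine ⟨e, ?_⟩
        rw [hy, mul_pow, ← pow_mul, mul_comm k e, pow_mul, hpnil,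
          zero_pow (by omega : k ≠ 0), mul_zero]
      have hyzero : φ (∏ i ∈ S, g i) = 0 := by
        have hfac : (φ (∏ i ∈ S, g i)) * ((φ (∏ i ∈ S, g i)) - 1) = 0 := by
          rw [mul_sub, hyidem, mul_one, sub_self]
        obtain ⟨v, hv⟩ := hynil.isUnit_sub_one
        calc φ (∏ i ∈ S, g i)
            = φ (∏ i ∈ S, g i) * ((φ (∏ i ∈ S, g i) - 1) * ↑v⁻¹) := by
              rw [← hv, Units.mul_inv, mul_one]
          _ = (φ (∏ i ∈ S, g i) * (φ (∏ i ∈ S, g i) - 1)) * ↑v⁻¹ := by ring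
          _ = 0 := by rw [hfac, zero_mul]
      -- contradiction
      have hpk : (p : ZMod (p ^ e)) ^ k = 0 := by
        have := hyzero
        rw [hy] at this
        exact (Units.mul_right_eq_zero W).mp this
      have hdvd : p ^ e ∣ p ^ k := by
        rw [← ZMod.natCast_eq_zero_iff, Nat.cast_pow]
        exact hpk
      have := (Nat.pow_dvd_pow_iff_le_right hp'.one_lt).mp hdvd
      omega
  -- conclude
  have hEBset : {t : ℕ | 0 < t ∧ ∀ f : Fin t → ZMod n,
      ∃ T : Finset (Fin t), T.Nonempty ∧
        (∏ i ∈ T, f i) * (∏ i ∈ T, f i) = ∏ i ∈ T, f i}.Nonempty :=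
    ⟨_, eb_set_mem (ZMod n)⟩
  have hfinal : Fintype.card ι + 1 ≤ ErdosBurgess (ZMod n) := le_csInf hEBset key
  omega
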